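/- arXiv:2004.02528 — 3 statements merged into one kernel-verified Lean document; each statement's English description precedes it below -/
import Mathlib

section
/- Let ψ : ℝⁿ → ℝ be a C² function whose entire graph in ℝ^{n+1}_1 is space-like or time-like (|∇ψ| ≠ 1 everywhere) and has constant mean curvature H. If there exist constants M > 0 and ε > 0 such that |∇ψ|/√(|1-|∇ψ|²|) ≤ M·(|u|²)^{1/2 - ε} on ℝⁿ, then H = 0. -/
open MeasureTheory Metric
open scoped ENNReal

set_option maxHeartbeats 2000000

/-- Divergence of a vector field on Euclidean space: trace of the total derivative. -/
noncomputable def vdiv {n : ℕ} (X : EuclideanSpace ℝ (Fin n) → EuclideanSpace ℝ (Fin n))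
    (u : EuclideanSpace ℝ (Fin n)) : ℝ :=
  LinearMap.trace ℝ (EuclideanSpace ℝ (Fin n)) (fderiv ℝ X u).toLinearMap

private lemma trace_eq_sum_coord {n : ℕ}
    (L : EuclideanSpace ℝ (Fin n) →L[ℝ] EuclideanSpace ℝ (Fin n)) :
    LinearMap.trace ℝ (EuclideanSpace ℝ (Fin n)) L.toLinearMap
      = ∑ i, L (EuclideanSpace.single i 1) i := by
  rw [LinearMap.trace_eq_matrix_trace ℝ ((EuclideanSpace.basisFun (Fin n) ℝ).toBasis)]
  rw [Matrix.trace]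
  refine Finset.sum_congr rfl fun i _ => ?_
  rw [Matrix.diag_apply, LinearMap.toMatrix_apply, OrthonormalBasis.coe_toBasis_repr_apply,
    OrthonormalBasis.coe_toBasis, EuclideanSpace.basisFun_apply]
  rfl

private lemma coord_le_norm {n : ℕ} (v : EuclideanSpace ℝ (Fin n)) (i : Fin n) :
    |v i| ≤ ‖v‖ := by
  rw [EuclideanSpace.norm_eq]
  have h1 : |v i| ^ 2 ≤ ∑ j, ‖v j‖ ^ 2 := by
    have := Finset.single_le_sum (f := fun j => ‖v j‖ ^ 2) (fun j _ => by positivity)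
      (Finset.mem_univ i)
    simpa [Real.norm_eq_abs] using this
  calc |v i| = Real.sqrt (|v i| ^ 2) := by rw [Real.sqrt_sq_eq_abs, abs_abs]
  _ ≤ _ := Real.sqrt_le_sqrt h1

private lemma X_differentiable {n : ℕ} (ψ : EuclideanSpace ℝ (Fin n) → ℝ)
    (hψ : ContDiff ℝ 2 ψ) (hne : ∀ v, (1 : ℝ) - ‖gradient ψ v‖ ^ 2 ≠ 0) :
    Differentiable ℝ
      (fun v => (Real.sqrt |1 - ‖gradient ψ v‖ ^ 2|)⁻¹ • gradient ψ v) := by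
  have hg : ContDiff ℝ 1 (gradient ψ) := by
    have h1 : ContDiff ℝ 1 (fderiv ℝ ψ) := hψ.fderiv_right (by norm_num)
    exact ((InnerProductSpace.toDual ℝ _).symm.contDiff).comp h1
  have hgd : Differentiable ℝ (gradient ψ) := hg.differentiable one_ne_zero
  intro u
  have hs : DifferentiableAt ℝ (fun v => (1 : ℝ) - ‖gradient ψ v‖ ^ 2) u := by
    have : DifferentiableAt ℝ (fun v => ‖gradient ψ v‖ ^ 2) u := by
      exact (hgd u).norm_sq ℝ
    exact (differentiableAt_const 1).sub this
  have habs : DifferentiableAt ℝ (fun v => |1 - ‖gradient ψ v‖ ^ 2|) u := by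
    rcases lt_or_gt_of_ne (hne u) with h | h
    · have he : (fun v => |1 - ‖gradient ψ v‖ ^ 2|) =ᶠ[nhds u]
          (fun v => -(1 - ‖gradient ψ v‖ ^ 2)) := by
        filter_upwards [hs.continuousAt.eventually_lt_const h] with v hv
        exact abs_of_neg hv
      exact (hs.neg).congr_of_eventuallyEq he
    · have he : (fun v => |1 - ‖gradient ψ v‖ ^ 2|) =ᶠ[nhds u]
          (fun v => (1 - ‖gradient ψ v‖ ^ 2)) := by
        filter_upwards [hs.continuousAt.eventually_const_lt h] with v hv
        exact abs_of_pos hv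
      exact hs.congr_of_eventuallyEq he
  have hsq : DifferentiableAt ℝ (fun v => Real.sqrt |1 - ‖gradient ψ v‖ ^ 2|) u :=
    habs.sqrt (abs_ne_zero.2 (hne u))
  exact (hsq.inv (Real.sqrt_pos.2 (abs_pos.2 (hne u))).ne').smul (hgd u)

/-- Unified vanishing theorem of mean curvature for entire space-like or time-like CMC
graphs with a gradient growth bound (Corollary 2.4). -/
theorem cmc_vanishing (n : ℕ) (hn : 0 < n) (M ε H : ℝ) (hM : 0 < M) (hε : 0 < ε)
    (ψ : EuclideanSpace ℝ (Fin n) → ℝ) (hψ : ContDiff ℝ 2 ψ)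
    (hcausal : ∀ u, ‖gradient ψ u‖ ≠ 1)
    (hgrad : ∀ u : EuclideanSpace ℝ (Fin n),
      ‖gradient ψ u‖ / Real.sqrt |1 - ‖gradient ψ u‖ ^ 2| ≤ M * (‖u‖ ^ 2) ^ ((1 : ℝ) / 2 - ε))
    (hmean : ∀ u, (n : ℝ) * H =
      vdiv (fun v => (Real.sqrt |1 - ‖gradient ψ v‖ ^ 2|)⁻¹ • gradient ψ v) u) :
    H = 0 := by
  obtain ⟨m, rfl⟩ : ∃ m, n = m + 1 := ⟨n - 1, (Nat.succ_pred_eq_of_pos hn).symm⟩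
  set X : EuclideanSpace ℝ (Fin (m + 1)) → EuclideanSpace ℝ (Fin (m + 1)) :=
    fun v => (Real.sqrt |1 - ‖gradient ψ v‖ ^ 2|)⁻¹ • gradient ψ v with hXdef
  have hne : ∀ v, (1 : ℝ) - ‖gradient ψ v‖ ^ 2 ≠ 0 := by
    intro v h
    apply hcausal v
    nlinarith [norm_nonneg (gradient ψ v)]
  have hXdiff : Differentiable ℝ X := X_differentiable ψ hψ hne
  have hXcont : Continuous X := hXdiff.continuous
  -- the norm bound on X
  have hXnorm : ∀ u, ‖X u‖ ≤ M * (‖u‖ ^ 2) ^ ((1 : ℝ) / 2 - ε) := by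
    intro u
    have : ‖X u‖ = ‖gradient ψ u‖ / Real.sqrt |1 - ‖gradient ψ u‖ ^ 2| := by
      rw [hXdef]
      rw [norm_smul, Real.norm_eq_abs, abs_of_nonneg (inv_nonneg.2 (Real.sqrt_nonneg _)),
        inv_mul_eq_div]
    rw [this]; exact hgrad u
  set σ := EuclideanSpace.equiv (Fin (m + 1)) ℝ with hσ
  set Y : (Fin (m + 1) → ℝ) → (Fin (m + 1) → ℝ) := fun x => σ (X (σ.symm x)) with hYdef
  set Y' : (Fin (m + 1) → ℝ) → (Fin (m + 1) → ℝ) →L[ℝ] (Fin (m + 1) → ℝ) :=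
    fun x => ((σ.toContinuousLinearMap.comp (fderiv ℝ X (σ.symm x))).comp
      σ.symm.toContinuousLinearMap) with hY'def
  have hYderiv : ∀ x, HasFDerivAt Y (Y' x) x := by
    intro x
    exact (σ.toContinuousLinearMap.hasFDerivAt.comp _
      ((hXdiff (σ.symm x)).hasFDerivAt.comp x σ.symm.toContinuousLinearMap.hasFDerivAt))
  have hYcont : Continuous Y := σ.continuous.comp (hXcont.comp σ.symm.continuous)
  have hdiv : ∀ x, ∑ i, Y' x (Pi.single i 1) i = ((m + 1 : ℕ) : ℝ) * H := by
    intro x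
    have h := hmean (σ.symm x)
    rw [vdiv, trace_eq_sum_coord] at h
    rw [h]
    rfl
  -- key estimate
  have key : ∀ R : ℝ, 1 ≤ R → |H| ≤ M * Real.sqrt (m + 1) * R ^ (-(2 * ε)) := by
    intro R hR
    have hR0 : (0 : ℝ) < R := lt_of_lt_of_le one_pos hR
    set a : Fin (m + 1) → ℝ := fun _ => -R with ha
    set b : Fin (m + 1) → ℝ := fun _ => R with hb
    have hle : a ≤ b := fun i => by simp [ha, hb]; linarith
    set CC : ℝ := M * Real.sqrt (m + 1) * R ^ ((1 : ℝ) - 2 * ε) with hCC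
    have hCC0 : 0 ≤ CC := by positivity
    -- pointwise bound on faces
    have hface : ∀ (c : ℝ), |c| = R → ∀ (i : Fin (m + 1)) (x : Fin m → ℝ),
        x ∈ Set.Icc (a ∘ i.succAbove) (b ∘ i.succAbove) → ‖Y (i.insertNth c x) i‖ ≤ CC := by
      intro c hc i x hx
      set y : Fin (m + 1) → ℝ := i.insertNth c x with hy
      set u : EuclideanSpace ℝ (Fin (m + 1)) := σ.symm y with hu
      have h1 : ‖Y y i‖ = |X u i| := rfl
      have h2 : |X u i| ≤ ‖X u‖ := coord_le_norm _ i
      have hu2 : ‖u‖ ^ 2 = ∑ j, (y j) ^ 2 := by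
        rw [EuclideanSpace.norm_eq, Real.sq_sqrt (by positivity)]
        refine Finset.sum_congr rfl fun j _ => ?_
        rw [Real.norm_eq_abs, sq_abs]
        rfl
      have hyb : ∀ j, (y j) ^ 2 ≤ R ^ 2 := by
        intro j
        rcases eq_or_ne j i with rfl | hji
        · rw [hy, Fin.insertNth_apply_same, ← sq_abs, hc]
        · obtain ⟨k, rfl⟩ := Fin.exists_succAbove_eq hji
          rw [hy, Fin.insertNth_apply_succAbove]
          obtain ⟨hx1, hx2⟩ := hx
          have hk1 := hx1 k
          have hk2 := hx2 k
          simp only [Function.comp_apply, ha, hb] at hk1 hk2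
          nlinarith
      have hlow : R ^ 2 ≤ ‖u‖ ^ 2 := by
        rw [hu2]
        have : (y i) ^ 2 = R ^ 2 := by rw [hy, Fin.insertNth_apply_same, ← sq_abs, hc]
        rw [← this]
        exact Finset.single_le_sum (f := fun j => (y j) ^ 2) (fun j _ => by positivity)
          (Finset.mem_univ i)
      have hup : ‖u‖ ^ 2 ≤ ((m : ℝ) + 1) * R ^ 2 := by
        rw [hu2]
        calc ∑ j, (y j) ^ 2 ≤ ∑ _j : Fin (m + 1), R ^ 2 :=
              Finset.sum_le_sum fun j _ => hyb j
        _ = ((m : ℝ) + 1) * R ^ 2 := by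
              rw [Finset.sum_const, nsmul_eq_mul, Finset.card_univ, Fintype.card_fin]
              push_cast
              ring
      have hrpow : (‖u‖ ^ 2) ^ ((1 : ℝ) / 2 - ε) ≤ Real.sqrt (m + 1) * R ^ ((1 : ℝ) - 2 * ε) := by
        have ht0 : (0 : ℝ) < ‖u‖ ^ 2 := lt_of_lt_of_le (by positivity) hlow
        have hR2 : ((R : ℝ) ^ 2) ^ ((1 : ℝ) / 2 - ε) = R ^ ((1 : ℝ) - 2 * ε) := by
          rw [← Real.rpow_natCast R 2, ← Real.rpow_mul hR0.le]
          congr 1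
          push_cast
          ring
        rcases le_or_gt 0 ((1 : ℝ) / 2 - ε) with hs | hs
        · have step1 : (‖u‖ ^ 2) ^ ((1 : ℝ) / 2 - ε) ≤ (((m : ℝ) + 1) * R ^ 2) ^ ((1 : ℝ) / 2 - ε) :=
            Real.rpow_le_rpow (by positivity) hup hs
          have step2 : (((m : ℝ) + 1) * R ^ 2) ^ ((1 : ℝ) / 2 - ε)
              = ((m : ℝ) + 1) ^ ((1 : ℝ) / 2 - ε) * R ^ ((1 : ℝ) - 2 * ε) := by
            rw [Real.mul_rpow (by positivity) (by positivity), hR2]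
          have step3 : ((m : ℝ) + 1) ^ ((1 : ℝ) / 2 - ε) ≤ Real.sqrt (m + 1) := by
            rw [show Real.sqrt ((m : ℝ) + 1) = ((m : ℝ) + 1) ^ ((1 : ℝ) / 2) from
              Real.sqrt_eq_rpow _]
            exact Real.rpow_le_rpow_of_exponent_le (by push_cast; linarith [Nat.cast_nonneg (α := ℝ) m]) (by linarith)
          calc (‖u‖ ^ 2) ^ ((1 : ℝ) / 2 - ε)
              ≤ ((m : ℝ) + 1) ^ ((1 : ℝ) / 2 - ε) * R ^ ((1 : ℝ) - 2 * ε) := by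
                rw [← step2]; exact step1
          _ ≤ Real.sqrt (m + 1) * R ^ ((1 : ℝ) - 2 * ε) :=
                mul_le_mul_of_nonneg_right step3 (by positivity)
        · have step1 : (‖u‖ ^ 2) ^ ((1 : ℝ) / 2 - ε) ≤ ((R : ℝ) ^ 2) ^ ((1 : ℝ) / 2 - ε) :=
            Real.rpow_le_rpow_of_nonpos (by positivity) hlow hs.le
          have step3 : (1 : ℝ) ≤ Real.sqrt (m + 1) := by
            have h1 : Real.sqrt 1 ≤ Real.sqrt ((m : ℝ) + 1) :=
              Real.sqrt_le_sqrt (by linarith [Nat.cast_nonneg (α := ℝ) m])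
            rwa [Real.sqrt_one] at h1
          calc (‖u‖ ^ 2) ^ ((1 : ℝ) / 2 - ε) ≤ R ^ ((1 : ℝ) - 2 * ε) := by rw [← hR2]; exact step1
          _ ≤ Real.sqrt (m + 1) * R ^ ((1 : ℝ) - 2 * ε) := by
                nlinarith [Real.rpow_pos_of_pos hR0 ((1 : ℝ) - 2 * ε)]
      calc ‖Y y i‖ = |X u i| := h1
      _ ≤ ‖X u‖ := h2
      _ ≤ M * (‖u‖ ^ 2) ^ ((1 : ℝ) / 2 - ε) := hXnorm u
      _ ≤ M * (Real.sqrt (m + 1) * R ^ ((1 : ℝ) - 2 * ε)) :=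
            mul_le_mul_of_nonneg_left hrpow hM.le
      _ = CC := by rw [hCC]; ring
    -- face integral bound
    have hfaceInt : ∀ (c : ℝ), |c| = R → ∀ (i : Fin (m + 1)),
        ‖∫ x in Set.Icc (a ∘ i.succAbove) (b ∘ i.succAbove), Y (i.insertNth c x) i‖
          ≤ CC * (2 * R) ^ m := by
      intro c hc i
      have hfin : volume (Set.Icc (a ∘ i.succAbove) (b ∘ i.succAbove)) < ⊤ :=
        (isCompact_Icc).measure_lt_top
      have := norm_setIntegral_le_of_norm_le_const (μ := volume) hfin
        (fun x hx => hface c hc i x hx)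
      rw [measureReal_def] at this
      refine le_trans this ?_
      have hv : (volume (Set.Icc (a ∘ i.succAbove) (b ∘ i.succAbove))).toReal
          = (2 * R) ^ m := by
        rw [Real.volume_Icc_pi_toReal (fun j => by
          simp only [ha, hb, Function.comp_apply]; linarith)]
        simp only [ha, hb, Function.comp_apply]
        rw [Finset.prod_const, Finset.card_univ, Fintype.card_fin]
        congr 1
        ring
      rw [hv]
    -- divergence theorem
    have hdivthm := MeasureTheory.integral_divergence_of_hasFDerivAt_off_countable
      a b hle Y Y' ∅ Set.countable_empty hYcont.continuousOn
      (fun x _ => hYderiv x)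
      (by
        have : (fun x : Fin (m + 1) → ℝ => ∑ i, Y' x (Pi.single i 1) i)
            = fun _ => ((m + 1 : ℕ) : ℝ) * H := funext hdiv
        rw [this]
        exact integrableOn_const (isCompact_Icc.measure_lt_top.ne))
    -- compute LHS
    have hLHS : (∫ x in Set.Icc a b, ∑ i, Y' x (Pi.single i 1) i)
        = (2 * R) ^ (m + 1) * (((m + 1 : ℕ) : ℝ) * H) := by
      have : (fun x : Fin (m + 1) → ℝ => ∑ i, Y' x (Pi.single i 1) i)
          = fun _ => ((m + 1 : ℕ) : ℝ) * H := funext hdiv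
      rw [this, setIntegral_const, smul_eq_mul]
      congr 1
      rw [measureReal_def, Real.volume_Icc_pi_toReal hle]
      simp only [ha, hb]
      rw [Finset.prod_const, Finset.card_univ, Fintype.card_fin]
      congr 1
      ring
    rw [hLHS] at hdivthm
    -- bound RHS
    have hRHS : |∑ i : Fin (m + 1),
        ((∫ x in Set.Icc (a ∘ i.succAbove) (b ∘ i.succAbove), Y (i.insertNth (b i) x) i) -
         ∫ x in Set.Icc (a ∘ i.succAbove) (b ∘ i.succAbove), Y (i.insertNth (a i) x) i)|
        ≤ ((m : ℝ) + 1) * (2 * (CC * (2 * R) ^ m)) := by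
      refine le_trans (Finset.abs_sum_le_sum_abs _ _) ?_
      have hbound : ∀ i : Fin (m + 1),
          |(∫ x in Set.Icc (a ∘ i.succAbove) (b ∘ i.succAbove), Y (i.insertNth (b i) x) i) -
           ∫ x in Set.Icc (a ∘ i.succAbove) (b ∘ i.succAbove), Y (i.insertNth (a i) x) i|
            ≤ 2 * (CC * (2 * R) ^ m) := by
        intro i
        have h1 := hfaceInt R (abs_of_pos hR0) i
        have h2 := hfaceInt (-R) (by rw [abs_neg]; exact abs_of_pos hR0) i
        have hb' : b i = R := rfl
        have ha' : a i = -R := rfl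
        rw [hb', ha']
        rw [Real.norm_eq_abs] at h1 h2
        have h3 := abs_sub_abs_le_abs_sub (∫ x in Set.Icc (a ∘ i.succAbove) (b ∘ i.succAbove),
          Y (i.insertNth R x) i) (∫ x in Set.Icc (a ∘ i.succAbove) (b ∘ i.succAbove),
          Y (i.insertNth (-R) x) i)
        have h4 := abs_sub (∫ x in Set.Icc (a ∘ i.succAbove) (b ∘ i.succAbove),
          Y (i.insertNth R x) i) (∫ x in Set.Icc (a ∘ i.succAbove) (b ∘ i.succAbove),
          Y (i.insertNth (-R) x) i)
        linarith
      calc ∑ i : Fin (m + 1),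
          |(∫ x in Set.Icc (a ∘ i.succAbove) (b ∘ i.succAbove), Y (i.insertNth (b i) x) i) -
           ∫ x in Set.Icc (a ∘ i.succAbove) (b ∘ i.succAbove), Y (i.insertNth (a i) x) i|
          ≤ ∑ _i : Fin (m + 1), 2 * (CC * (2 * R) ^ m) :=
            Finset.sum_le_sum fun i _ => hbound i
      _ = ((m : ℝ) + 1) * (2 * (CC * (2 * R) ^ m)) := by
            rw [Finset.sum_const, nsmul_eq_mul, Finset.card_univ, Fintype.card_fin]
            push_cast
            ring
    rw [← hdivthm] at hRHS
    -- extract |H| bound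
    have hP : (0 : ℝ) < (2 * R) ^ m := by positivity
    have hAbs : (2 * R) ^ (m + 1) * (((m : ℝ) + 1) * |H|)
        ≤ ((m : ℝ) + 1) * (2 * (CC * (2 * R) ^ m)) := by
      calc (2 * R) ^ (m + 1) * (((m : ℝ) + 1) * |H|)
          = |(2 * R) ^ (m + 1) * (((m + 1 : ℕ) : ℝ) * H)| := by
            rw [abs_mul, abs_mul, abs_of_nonneg (by positivity : (0:ℝ) ≤ (2*R)^(m+1))]
            push_cast
            rw [abs_of_nonneg (by positivity : (0:ℝ) ≤ (m:ℝ)+1)]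
      _ ≤ _ := hRHS
    have hHle : |H| ≤ CC / R := by
      rw [pow_succ] at hAbs
      have h5 : 2 * R * (((m : ℝ) + 1) * |H|) ≤ ((m : ℝ) + 1) * (2 * CC) := by
        apply le_of_mul_le_mul_right _ hP
        linear_combination hAbs
      have h6 : |H| * R ≤ CC := by
        apply le_of_mul_le_mul_left _ (show (0:ℝ) < 2 * ((m : ℝ) + 1) by positivity)
        linear_combination h5
      exact (le_div_iff₀ hR0).mpr h6
    have hpw : R ^ (-(2 * ε)) = R ^ ((1 : ℝ) - 2 * ε) / R := by
      rw [eq_div_iff hR0.ne', ← Real.rpow_add_one hR0.ne']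
      congr 1
      ring
    calc |H| ≤ CC / R := hHle
    _ = M * Real.sqrt (m + 1) * R ^ (-(2 * ε)) := by
        rw [hCC, mul_div_assoc, hpw]
  -- take the limit R → ∞
  have hlim : Filter.Tendsto (fun R : ℝ => M * Real.sqrt (m + 1) * R ^ (-(2 * ε)))
      Filter.atTop (nhds 0) := by
    have := (tendsto_rpow_neg_atTop (by positivity : (0:ℝ) < 2 * ε)).const_mul
      (M * Real.sqrt (m + 1))
    simpa using this
  have habs : |H| ≤ 0 :=
    ge_of_tendsto hlim (Filter.eventually_atTop.2 ⟨1, fun R hR => key R hR⟩)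
  exact abs_nonpos_iff.mp habs
end

section
/- Let ψ : ℝⁿ → ℝ be a C² function with |∇ψ| < 1 everywhere whose graph has constant mean curvature H in ℝ^{n+1}_1. If sinh θ = |∇ψ|/√(1-|∇ψ|²) is bounded on ℝⁿ, then H = 0 (hence, by the Calabi–Bernstein theorem, the graph is a space-like hyperplane). -/
open MeasureTheory Metric
open scoped ENNReal

open Set in
lemma euc_apply {k : ℕ} (v : EuclideanSpace ℝ (Fin k)) (i : Fin k) :
    (EuclideanSpace.equiv (Fin k) ℝ) v i = v i := rfl
lemma euc_symm_single {k : ℕ} (i : Fin k) :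
    (EuclideanSpace.equiv (Fin k) ℝ).symm (Pi.single i 1) = EuclideanSpace.single i (1:ℝ) := rfl
lemma euc_coord_le_norm {k : ℕ} (v : EuclideanSpace ℝ (Fin k)) (i : Fin k) :
    |v i| ≤ ‖v‖ := by
  rw [EuclideanSpace.norm_eq]
  calc |v i| = Real.sqrt (‖v i‖ ^ 2) := by rw [Real.norm_eq_abs, Real.sqrt_sq_eq_abs, abs_abs]
    _ ≤ _ := Real.sqrt_le_sqrt
        (Finset.single_le_sum (f := fun j => ‖v j‖ ^ 2) (fun j _ => by positivity)
          (Finset.mem_univ i))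

open Set in
theorem pi_liouville {n : ℕ} (c B : ℝ)
    (Y : (Fin (n+1) → ℝ) → (Fin (n+1) → ℝ))
    (D : (Fin (n+1) → ℝ) → (Fin (n+1) → ℝ) →L[ℝ] (Fin (n+1) → ℝ))
    (hd : ∀ x, HasFDerivAt Y (D x) x)
    (hdiv : ∀ x, ∑ i, D x (Pi.single i 1) i = c)
    (hB : ∀ x i, |Y x i| ≤ B) : c = 0 := by
  have hcont : Continuous Y := by
    rw [continuous_iff_continuousAt]; exact fun x => (hd x).differentiableAt.continuousAt
  have hB0 : 0 ≤ B := le_trans (abs_nonneg _) (hB 0 0)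
  have key : ∀ R : ℝ, 0 < R → |c| * (2*R) ≤ (n+1) * (2*B) := by
    intro R hR
    set a : Fin (n+1) → ℝ := fun _ => -R with ha
    set b : Fin (n+1) → ℝ := fun _ => R with hb
    have hle : a ≤ b := fun i => by simp [ha, hb]; linarith
    have hIcc : (volume (Icc a b)).toReal = (2*R)^(n+1) := by
      rw [Real.volume_Icc_pi_toReal hle]
      simp [ha, hb]; ring
    have hfacevol : ∀ i : Fin (n+1),
        (volume (Icc (a ∘ i.succAbove) (b ∘ i.succAbove))).toReal = (2*R)^n := by
      intro i
      rw [show a ∘ i.succAbove = (fun _ => -R) from rfl,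
        show b ∘ i.succAbove = (fun _ => R) from rfl,
        Real.volume_Icc_pi_toReal (fun j => by simp; linarith)]
      simp; try ring
    have hdt := integral_divergence_of_hasFDerivAt_off_countable a b hle Y D ∅
      countable_empty hcont.continuousOn
      (fun x _ => hd x)
      (by
        refine ((integrableOn_const_iff (C := c)).2 (Or.inr ?_)).congr_fun (fun x _ => (hdiv x).symm)
          measurableSet_Icc
        exact (isCompact_Icc).measure_lt_top)
    have hLHS : (∫ x in Icc a b, ∑ i, D x (Pi.single i 1) i) = c * (2*R)^(n+1) := by
      rw [setIntegral_congr_fun measurableSet_Icc (fun x _ => hdiv x)]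
      rw [setIntegral_const, smul_eq_mul, mul_comm, measureReal_def, hIcc]
    have hface : ∀ (i : Fin (n+1)) (t : ℝ),
        ‖∫ x in Icc (a ∘ i.succAbove) (b ∘ i.succAbove), Y (i.insertNth t x) i‖
          ≤ B * (2*R)^n := by
      intro i t
      rw [← hfacevol i]
      refine norm_setIntegral_le_of_norm_le_const ?_ ?_
      · exact (isCompact_Icc).measure_lt_top
      · intro x _; exact hB _ i
    have hRHS : ‖∑ i : Fin (n+1),
        ((∫ x in Icc (a ∘ i.succAbove) (b ∘ i.succAbove), Y (i.insertNth (b i) x) i) -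
          ∫ x in Icc (a ∘ i.succAbove) (b ∘ i.succAbove), Y (i.insertNth (a i) x) i)‖
          ≤ (n+1) * (2*B*(2*R)^n) := by
      refine le_trans (norm_sum_le _ _) ?_
      have : ∀ i : Fin (n+1),
          ‖(∫ x in Icc (a ∘ i.succAbove) (b ∘ i.succAbove), Y (i.insertNth (b i) x) i) -
            ∫ x in Icc (a ∘ i.succAbove) (b ∘ i.succAbove), Y (i.insertNth (a i) x) i‖
            ≤ 2*B*(2*R)^n := by
        intro i
        refine le_trans (norm_sub_le _ _) ?_
        have h1 := hface i (b i)
        have h2 := hface i (a i)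
        linarith
      calc ∑ i : Fin (n+1), _ ≤ ∑ _i : Fin (n+1), 2*B*(2*R)^n :=
            Finset.sum_le_sum (fun i _ => this i)
        _ = (n+1) * (2*B*(2*R)^n) := by simp [Finset.sum_const]; try ring
    rw [hLHS] at hdt
    have : |c| * (2*R)^(n+1) ≤ (n+1) * (2*B*(2*R)^n) := by
      calc |c| * (2*R)^(n+1) = ‖c * (2*R)^(n+1)‖ := by
            rw [Real.norm_eq_abs, abs_mul, abs_of_nonneg (by positivity : (0:ℝ) ≤ (2*R)^(n+1))]
        _ ≤ _ := by rw [hdt]; exact hRHS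
    have hpow : (0:ℝ) < (2*R)^n := by positivity
    have h2 : (|c| * (2*R)) * (2*R)^n ≤ ((n+1:ℝ) * (2*B)) * (2*R)^n := by
      rw [pow_succ] at this; ring_nf at this ⊢; linarith
    exact le_of_mul_le_mul_right h2 hpow
  by_contra hc
  have hcpos : 0 < |c| := abs_pos.2 hc
  set Q : ℝ := ((n:ℝ)+1) * (2*B) + 1 with hQ
  have hQpos : 0 < Q := by positivity
  have := key (Q / |c|) (by positivity)
  have h4 : |c| * (2 * (Q/|c|)) = 2*Q := by field_simp
  rw [h4] at this
  have h5 : (0:ℝ) ≤ ((n:ℝ)+1) * (2*B) := by positivity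
  rw [hQ] at this
  linarith

/-- Liouville-type result: an entire space-like CMC graph with bounded
sinh θ = |∇ψ|/√(1-|∇ψ|²) has vanishing mean curvature (Corollary 3.3). -/
theorem cmc_vanishing_bounded_angle (n : ℕ) (hn : 0 < n) (H : ℝ)
    (ψ : EuclideanSpace ℝ (Fin n) → ℝ) (hψ : ContDiff ℝ 2 ψ)
    (hsp : ∀ u, ‖gradient ψ u‖ < 1)
    (hmean : ∀ u, (n : ℝ) * H =
      vdiv (fun v => (Real.sqrt (1 - ‖gradient ψ v‖ ^ 2))⁻¹ • gradient ψ v) u)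
    (hbdd : ∃ B : ℝ, ∀ u : EuclideanSpace ℝ (Fin n),
      ‖gradient ψ u‖ / Real.sqrt (1 - ‖gradient ψ u‖ ^ 2) ≤ B) :
    H = 0 := by
  obtain ⟨B, hB⟩ := hbdd
  set g : EuclideanSpace ℝ (Fin n) → EuclideanSpace ℝ (Fin n) := gradient ψ with hgdef
  set X : EuclideanSpace ℝ (Fin n) → EuclideanSpace ℝ (Fin n) :=
    fun v => (Real.sqrt (1 - ‖g v‖ ^ 2))⁻¹ • g v with hXdef
  -- positivity of 1 - ‖g v‖²
  have hpos : ∀ v, 0 < 1 - ‖g v‖ ^ 2 := by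
    intro v
    have h1 := hsp v
    have h2 : (0:ℝ) ≤ ‖g v‖ := norm_nonneg _
    nlinarith
  have hsqrtpos : ∀ v, 0 < Real.sqrt (1 - ‖g v‖ ^ 2) := fun v => Real.sqrt_pos.2 (hpos v)
  -- smoothness of g
  have hg : ContDiff ℝ 1 g := by
    have h1 : ContDiff ℝ 1 (fderiv ℝ ψ) := hψ.fderiv_right (by norm_num)
    exact (InnerProductSpace.toDual ℝ (EuclideanSpace ℝ (Fin n))).symm.contDiff.comp h1
  -- X is C¹ at every point
  have hXc1 : ∀ u, ContDiffAt ℝ 1 X u := by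
    intro u
    have h2 : ContDiffAt ℝ 1 (fun v => 1 - ‖g v‖ ^ 2) u :=
      (contDiff_const.sub (hg.norm_sq (𝕜 := ℝ))).contDiffAt
    have h3 : ContDiffAt ℝ 1 (fun v => Real.sqrt (1 - ‖g v‖ ^ 2)) u :=
      h2.sqrt (hpos u).ne'
    exact (h3.inv (hsqrtpos u).ne').smul hg.contDiffAt
  have hXd : ∀ u, DifferentiableAt ℝ X u := fun u => (hXc1 u).differentiableAt one_ne_zero
  -- bound
  have hXB : ∀ u, ‖X u‖ ≤ B := by
    intro u
    have : ‖X u‖ = ‖g u‖ / Real.sqrt (1 - ‖g u‖ ^ 2) := by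
      rw [hXdef]
      rw [norm_smul, Real.norm_eq_abs,
        abs_of_nonneg (inv_nonneg.2 (Real.sqrt_nonneg _)), inv_mul_eq_div]
    rw [this]; exact hB u
  -- divergence as sum of components
  have hvdiv : ∀ u, vdiv X u = ∑ i, (fderiv ℝ X u) (EuclideanSpace.single i 1) i := by
    intro u
    rw [vdiv, LinearMap.trace_eq_matrix_trace ℝ ((EuclideanSpace.basisFun (Fin n) ℝ).toBasis),
      Matrix.trace]
    refine Finset.sum_congr rfl fun i _ => ?_
    rw [Matrix.diag_apply, LinearMap.toMatrix_apply]
    simp [OrthonormalBasis.coe_toBasis, OrthonormalBasis.coe_toBasis_repr_apply,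
      EuclideanSpace.basisFun_apply, EuclideanSpace.basisFun_repr]
  have hdivX : ∀ u, vdiv X u = (n:ℝ) * H := fun u => (hmean u).symm
  -- transfer to Fin n → ℝ
  obtain ⟨m, rfl⟩ := Nat.exists_eq_succ_of_ne_zero hn.ne'
  set e := EuclideanSpace.equiv (Fin (m+1)) ℝ with hedef
  set Y : (Fin (m+1) → ℝ) → (Fin (m+1) → ℝ) := fun x => e (X (e.symm x)) with hYdef
  set D : (Fin (m+1) → ℝ) → (Fin (m+1) → ℝ) →L[ℝ] (Fin (m+1) → ℝ) :=
    fun x => ((e : EuclideanSpace ℝ (Fin (m+1)) →L[ℝ] (Fin (m+1) → ℝ)).comp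
      (fderiv ℝ X (e.symm x))).comp
      (e.symm : (Fin (m+1) → ℝ) →L[ℝ] EuclideanSpace ℝ (Fin (m+1))) with hDdef
  have hd : ∀ x, HasFDerivAt Y (D x) x := by
    intro x
    have h1 : HasFDerivAt X (fderiv ℝ X (e.symm x)) (e.symm x) := (hXd _).hasFDerivAt
    have h2 : HasFDerivAt (⇑e.symm)
        (e.symm : (Fin (m+1) → ℝ) →L[ℝ] EuclideanSpace ℝ (Fin (m+1))) x := e.symm.hasFDerivAt
    have h3 : HasFDerivAt (⇑e)
        (e : EuclideanSpace ℝ (Fin (m+1)) →L[ℝ] (Fin (m+1) → ℝ)) (X (e.symm x)) := e.hasFDerivAt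
    have := h3.comp x (h1.comp x h2); exact this
  have hdiv' : ∀ x, ∑ i, D x (Pi.single i 1) i = ((m:ℝ)+1) * H := by
    intro x
    have h4 : ∀ i : Fin (m+1), D x (Pi.single i 1) i
        = (fderiv ℝ X (e.symm x)) (EuclideanSpace.single i 1) i := by
      intro i
      have e2 : D x (Pi.single i 1)
          = e ((fderiv ℝ X (e.symm x)) (EuclideanSpace.single i 1)) := by
        simp only [hDdef, ContinuousLinearMap.comp_apply, ContinuousLinearEquiv.coe_coe]
        rw [hedef, euc_symm_single]
      rw [e2, hedef, euc_apply]
    rw [Finset.sum_congr rfl fun i _ => h4 i]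
    rw [← hvdiv, hdivX]
    push_cast; ring
  have hBY : ∀ x i, |Y x i| ≤ B := by
    intro x i
    have hYi : Y x i = X (e.symm x) i := by rw [hYdef]; exact euc_apply _ i
    rw [hYi]
    exact (euc_coord_le_norm _ i).trans (hXB _)
  have hc := pi_liouville (((m:ℝ)+1) * H) B Y D hd hdiv' hBY
  have hm1 : ((m:ℝ)+1) ≠ 0 := by positivity
  rcases mul_eq_zero.1 hc with h | h
  · exact absurd h hm1
  · exact h
end

section
/- Let ψ : B²(R) → ℝ be a C² function on the open disk of radius R in ℝ² whose graph in Euclidean ℝ³ has mean curvature H given by 2H = div(∇ψ/√(1+|∇ψ|²)). If |H| ≥ α > 0 on B²(R), then R ≤ 1/α. -/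
open MeasureTheory Metric
open scoped ENNReal

open Real

notation "E2" => EuclideanSpace ℝ (Fin 2)

namespace HeinzAux

noncomputable def w : ℝ → E2 := fun θ =>
  cos θ • EuclideanSpace.single (0 : Fin 2) (1:ℝ) + sin θ • EuclideanSpace.single (1 : Fin 2) (1:ℝ)
noncomputable def w' : ℝ → E2 := fun θ =>
  (-sin θ) • EuclideanSpace.single (0 : Fin 2) (1:ℝ) + cos θ • EuclideanSpace.single (1 : Fin 2) (1:ℝ)

lemma w_deriv (θ : ℝ) : HasDerivAt w (w' θ) θ := by
  unfold w w'
  exact ((Real.hasDerivAt_cos θ).smul_const _).add ((Real.hasDerivAt_sin θ).smul_const _)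

lemma w'_deriv (θ : ℝ) : HasDerivAt w' (-w θ) θ := by
  have h := HasDerivAt.add
    (((Real.hasDerivAt_sin θ).neg.smul_const (EuclideanSpace.single (0 : Fin 2) (1:ℝ))))
    ((Real.hasDerivAt_cos θ).smul_const (EuclideanSpace.single (1 : Fin 2) (1:ℝ)))
  refine h.congr_deriv ?_
  unfold w; module

lemma continuous_w : Continuous w := by
  unfold w; fun_prop

lemma continuous_w' : Continuous w' := by
  unfold w'; fun_prop

lemma norm_w (θ : ℝ) : ‖w θ‖ = 1 := by
  have : @inner ℝ _ _ (w θ) (w θ) = 1 := by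
    simp only [w, inner_add_left, inner_add_right, real_inner_smul_left, real_inner_smul_right,
      EuclideanSpace.inner_single_left, PiLp.single_apply]
    simp
    nlinarith [sin_sq_add_cos_sq θ]
  have h2 := real_inner_self_eq_norm_sq (w θ)
  nlinarith [norm_nonneg (w θ)]

lemma w_periodic : w (2*π) = w 0 := by simp [w]
lemma w'_periodic : w' (2*π) = w' 0 := by simp [w']

lemma rot_trace (A : E2 →L[ℝ] E2) (θ : ℝ) :
    @inner ℝ _ _ (w θ) (A (w θ)) + @inner ℝ _ _ (w' θ) (A (w' θ)) =
    ∑ i : Fin 2, @inner ℝ _ _ (EuclideanSpace.single i (1:ℝ)) (A (EuclideanSpace.single i 1)) := by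
  simp only [w, w', map_add, A.map_smul, inner_add_left, inner_add_right,
    real_inner_smul_left, real_inner_smul_right, Fin.sum_univ_two]
  linear_combination (@inner ℝ _ _ (EuclideanSpace.single (0:Fin 2) (1:ℝ)) (A (EuclideanSpace.single (0:Fin 2) (1:ℝ))) + @inner ℝ _ _ (EuclideanSpace.single (1:Fin 2) (1:ℝ)) (A (EuclideanSpace.single (1:Fin 2) (1:ℝ)))) * sin_sq_add_cos_sq θ

lemma trace_diag (A : E2 →L[ℝ] E2) :
    LinearMap.trace ℝ E2 A.toLinearMap =
      ∑ i : Fin 2, @inner ℝ _ _ (EuclideanSpace.single i (1:ℝ)) (A (EuclideanSpace.single i 1)) := by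
  rw [LinearMap.trace_eq_matrix_trace ℝ (EuclideanSpace.basisFun (Fin 2) ℝ).toBasis, Matrix.trace]
  congr 1
  ext i
  simp [Matrix.diag, LinearMap.toMatrix_apply, EuclideanSpace.basisFun_apply,
    EuclideanSpace.inner_single_left]

noncomputable def Phi : ℝ × ℝ → E2 := fun p => p.1 • w p.2

lemma norm_Phi (p : ℝ × ℝ) : ‖Phi p‖ = |p.1| := by
  simp [Phi, norm_smul, norm_w, abs_eq_self.2]

lemma continuous_Phi : Continuous Phi :=
  continuous_fst.smul (continuous_w.comp continuous_snd)

noncomputable def ff (Y : E2 → E2) : ℝ × ℝ → ℝ := fun p => p.1 * @inner ℝ _ _ (Y (Phi p)) (w p.2)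
noncomputable def gg (Y : E2 → E2) : ℝ × ℝ → ℝ := fun p => @inner ℝ _ _ (Y (Phi p)) (w' p.2)

noncomputable def W (p : ℝ × ℝ) : ℝ × ℝ →L[ℝ] E2 :=
  ((1 : ℝ →L[ℝ] ℝ).smulRight (w' p.2)).comp (ContinuousLinearMap.snd ℝ ℝ ℝ)
noncomputable def W2 (p : ℝ × ℝ) : ℝ × ℝ →L[ℝ] E2 :=
  ((1 : ℝ →L[ℝ] ℝ).smulRight (-w p.2)).comp (ContinuousLinearMap.snd ℝ ℝ ℝ)
noncomputable def DPhi (p : ℝ × ℝ) : ℝ × ℝ →L[ℝ] E2 :=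
  p.1 • W p + (ContinuousLinearMap.fst ℝ ℝ ℝ).smulRight (w p.2)

noncomputable def Df (Y : E2 → E2) (p : ℝ × ℝ) : ℝ × ℝ →L[ℝ] ℝ :=
  p.1 • ((fderivInnerCLM ℝ (Y (Phi p), w p.2)).comp
      (((fderiv ℝ Y (Phi p)).comp (DPhi p)).prod (W p)))
  + (@inner ℝ _ _ (Y (Phi p)) (w p.2)) • ContinuousLinearMap.fst ℝ ℝ ℝ

noncomputable def Dg (Y : E2 → E2) (p : ℝ × ℝ) : ℝ × ℝ →L[ℝ] ℝ :=
  (fderivInnerCLM ℝ (Y (Phi p), w' p.2)).comp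
      (((fderiv ℝ Y (Phi p)).comp (DPhi p)).prod (W2 p))

lemma hasFDerivAt_Phi (p : ℝ × ℝ) : HasFDerivAt Phi (DPhi p) p := by
  have h1 : HasFDerivAt (fun q : ℝ × ℝ => q.1) (ContinuousLinearMap.fst ℝ ℝ ℝ) p :=
    hasFDerivAt_fst
  have h2 : HasFDerivAt (fun q : ℝ × ℝ => w q.2) (W p) p :=
    (w_deriv p.2).hasFDerivAt.comp p hasFDerivAt_snd
  exact h1.smul h2

lemma hasFDerivAt_ff (Y : E2 → E2) (p : ℝ × ℝ) (hY : DifferentiableAt ℝ Y (Phi p)) :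
    HasFDerivAt (ff Y) (Df Y p) p := by
  have hYΦ : HasFDerivAt (fun q => Y (Phi q)) ((fderiv ℝ Y (Phi p)).comp (DPhi p)) p :=
    (hY.hasFDerivAt).comp p (hasFDerivAt_Phi p)
  have h2 : HasFDerivAt (fun q : ℝ × ℝ => w q.2) (W p) p :=
    (w_deriv p.2).hasFDerivAt.comp p hasFDerivAt_snd
  have hi := (hYΦ.inner ℝ h2)
  exact hasFDerivAt_fst.mul hi

lemma hasFDerivAt_gg (Y : E2 → E2) (p : ℝ × ℝ) (hY : DifferentiableAt ℝ Y (Phi p)) :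
    HasFDerivAt (gg Y) (Dg Y p) p := by
  have hYΦ : HasFDerivAt (fun q => Y (Phi q)) ((fderiv ℝ Y (Phi p)).comp (DPhi p)) p :=
    (hY.hasFDerivAt).comp p (hasFDerivAt_Phi p)
  have h2 : HasFDerivAt (fun q : ℝ × ℝ => w' q.2) (W2 p) p :=
    (w'_deriv p.2).hasFDerivAt.comp p hasFDerivAt_snd
  exact hYΦ.inner ℝ h2

lemma eval_div (Y : E2 → E2) (p : ℝ × ℝ) :
    Df Y p (1, 0) + Dg Y p (0, 1) = p.1 * vdiv Y (Phi p) := by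
  have h := rot_trace (fderiv ℝ Y (Phi p)) p.2
  have h2 := trace_diag (fderiv ℝ Y (Phi p))
  simp only [Df, Dg, W, W2, DPhi, vdiv, ContinuousLinearMap.add_apply,
    ContinuousLinearMap.coe_comp', Function.comp_apply, ContinuousLinearMap.smul_apply,
    ContinuousLinearMap.prod_apply, fderivInnerCLM_apply, ContinuousLinearMap.smulRight_apply,
    ContinuousLinearMap.coe_fst', ContinuousLinearMap.coe_snd', ContinuousLinearMap.one_apply,
    one_smul, zero_smul, smul_zero, map_add, _root_.map_smul, map_zero, inner_zero_left, inner_zero_right, inner_neg_right,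
    inner_add_left, inner_add_right, real_inner_smul_left, real_inner_smul_right, smul_eq_mul]
  rw [h2, ← h]
  rw [real_inner_comm (w p.2) ((fderiv ℝ Y (Phi p)) (w p.2)),
    real_inner_comm (w' p.2) ((fderiv ℝ Y (Phi p)) (w' p.2))]
  ring


lemma ff_def (Y : E2 → E2) (p : ℝ × ℝ) :
    ff Y p = p.1 * @inner ℝ _ _ (Y (Phi p)) (w p.2) := rfl

lemma gg_periodic (Y : E2 → E2) (x : ℝ) : gg Y (x, 2*π) = gg Y (x, 0) := by
  simp only [gg, Phi, w_periodic, w'_periodic]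

lemma continuousOn_gg (Y : E2 → E2) (s : Set (ℝ × ℝ))
    (hYc : ContinuousOn Y (Phi '' s)) : ContinuousOn (gg Y) s := by
  unfold gg
  exact ContinuousOn.inner
    (hYc.comp continuous_Phi.continuousOn (Set.mapsTo_image Phi s))
    ((continuous_w'.comp continuous_snd).continuousOn)

lemma core (R α r : ℝ) (hα : 0 < α) (hr : 0 < r) (hrR : r < R) (Y : E2 → E2)
    (hYd : ∀ u ∈ ball (0:E2) R, DifferentiableAt ℝ Y u)
    (hYc : ContinuousOn Y (ball (0:E2) R))
    (hvc : ContinuousOn (vdiv Y) (ball (0:E2) R))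
    (hnorm : ∀ u ∈ ball (0:E2) R, ‖Y u‖ ≤ 1)
    (hdiv : ∀ u ∈ ball (0:E2) R, 2*α ≤ vdiv Y u) :
    α * r^2 ≤ r := by
  have hπ := pi_pos
  set a : ℝ × ℝ := (0, 0) with ha
  set b : ℝ × ℝ := (r, 2*π) with hb
  have hle : a ≤ b := ⟨hr.le, by positivity⟩
  have hmem : ∀ p ∈ Set.Icc a b, Phi p ∈ ball (0:E2) R := by
    intro p hp
    rw [mem_ball_zero_iff, norm_Phi]
    have h1 : (0:ℝ) ≤ p.1 := hp.1.1
    have h2 : p.1 ≤ r := hp.2.1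
    exact lt_of_le_of_lt (abs_le.mpr ⟨by linarith, h2⟩) hrR
  have himg : ContinuousOn Y (Phi '' Set.Icc a b) :=
    hYc.mono (by rintro _ ⟨p, hp, rfl⟩; exact hmem p hp)
  have hcont_f : ContinuousOn (ff Y) (Set.Icc a b) := by
    have : ContinuousOn (fun p : ℝ × ℝ => p.1 * @inner ℝ _ _ (Y (Phi p)) (w p.2))
        (Set.Icc a b) := by
      apply continuous_fst.continuousOn.mul
      exact ContinuousOn.inner
        (himg.comp continuous_Phi.continuousOn (Set.mapsTo_image Phi _))
        ((continuous_w.comp continuous_snd).continuousOn)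
    have hfe : ff Y = fun p : ℝ × ℝ => p.1 * @inner ℝ _ _ (Y (Phi p)) (w p.2) :=
      funext (ff_def Y)
    rw [hfe]; exact this
  have hcont_g : ContinuousOn (gg Y) (Set.Icc a b) := continuousOn_gg Y _ himg
  have hcont_div : ContinuousOn (fun p => p.1 * vdiv Y (Phi p)) (Set.Icc a b) :=
    continuous_fst.continuousOn.mul
      (hvc.comp continuous_Phi.continuousOn hmem)
  have Hi0 : IntegrableOn (fun p => p.1 * vdiv Y (Phi p)) (Set.Icc a b) :=
    hcont_div.integrableOn_compact isCompact_Icc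
  have heq : (fun p : ℝ × ℝ => Df Y p (1, 0) + Dg Y p (0, 1))
      = fun p => p.1 * vdiv Y (Phi p) := funext (eval_div Y)
  have Hi : IntegrableOn (fun p : ℝ × ℝ => Df Y p (1, 0) + Dg Y p (0, 1)) (Set.Icc a b) := by
    rw [heq]; exact Hi0
  have hIoo : Set.Ioo a.1 b.1 ×ˢ Set.Ioo a.2 b.2 \ (∅ : Set (ℝ × ℝ)) ⊆ Set.Icc a b := by
    rintro p ⟨hp, -⟩
    exact ⟨⟨hp.1.1.le, hp.2.1.le⟩, ⟨hp.1.2.le, hp.2.2.le⟩⟩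
  have key := integral_divergence_prod_Icc_of_hasFDerivAt_off_countable_of_le
    (ff Y) (gg Y) (Df Y) (Dg Y) a b hle ∅ Set.countable_empty hcont_f hcont_g
    (fun p hp => hasFDerivAt_ff Y p (hYd _ (hmem p (hIoo hp))))
    (fun p hp => hasFDerivAt_gg Y p (hYd _ (hmem p (hIoo hp))))
    Hi
  rw [heq] at key
  -- boundary simplifications
  have e2 : ∀ y : ℝ, ff Y (a.1, y) = 0 := by intro y; rw [ff_def]; simp [ha]
  have hbb : (∫ x in a.1..b.1, gg Y (x, b.2)) = ∫ x in a.1..b.1, gg Y (x, a.2) := by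
    simp only [ha, hb]
    exact intervalIntegral.integral_congr fun x _ => gg_periodic Y x
  rw [hbb] at key
  simp only [sub_self, zero_add, e2, intervalIntegral.integral_zero, sub_zero] at key
  -- upper bound for the boundary integral
  have hupper : (∫ y in a.2..b.2, ff Y (b.1, y)) ≤ 2 * π * r := by
    have hint : IntervalIntegrable (fun y => ff Y (b.1, y)) volume a.2 b.2 := by
      apply ContinuousOn.intervalIntegrable
      have : ContinuousOn (fun y : ℝ => (b.1, y)) (Set.uIcc a.2 b.2) :=
        (continuous_const.prodMk continuous_id).continuousOn
      apply hcont_f.comp this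
      intro y hy
      rw [Set.uIcc_of_le hle.2] at hy
      exact ⟨⟨hle.1, hy.1⟩, ⟨le_refl _, hy.2⟩⟩
    have hptwise : ∀ y ∈ Set.Icc a.2 b.2, ff Y (b.1, y) ≤ r := by
      intro y hy
      rw [ff_def]
      have hin : Phi (b.1, y) ∈ ball (0:E2) R := by
        rw [mem_ball_zero_iff, norm_Phi]
        simpa [hb, abs_of_pos hr] using hrR
      have : @inner ℝ _ _ (Y (Phi (b.1, y))) (w y) ≤ 1 := by
        calc @inner ℝ _ _ (Y (Phi (b.1, y))) (w y) ≤ ‖Y (Phi (b.1, y))‖ * ‖w y‖ :=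
              real_inner_le_norm _ _
        _ ≤ 1 := by rw [norm_w]; simpa using hnorm _ hin
      calc (b.1) * @inner ℝ _ _ (Y (Phi (b.1, y))) (w y) ≤ b.1 * 1 := by
            apply mul_le_mul_of_nonneg_left this
            simpa [hb] using hr.le
      _ = r := by simp [hb]
    calc (∫ y in a.2..b.2, ff Y (b.1, y)) ≤ ∫ y in a.2..b.2, r := by
          apply intervalIntegral.integral_mono_on hle.2 hint intervalIntegrable_const hptwise
    _ = 2 * π * r := by simp [ha, hb]

  -- lower bound for the area integral
  have hlower : 2 * α * (π * r ^ 2) ≤ ∫ p in Set.Icc a b, p.1 * vdiv Y (Phi p) := by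
    have hmono : (∫ p in Set.Icc a b, 2 * α * p.1)
        ≤ ∫ p in Set.Icc a b, p.1 * vdiv Y (Phi p) := by
      apply setIntegral_mono_on
        ((continuous_const.mul continuous_fst).continuousOn.integrableOn_compact isCompact_Icc)
        Hi0 measurableSet_Icc
      intro p hp
      have h1 : (0:ℝ) ≤ p.1 := hp.1.1
      have h2 := hdiv _ (hmem p hp)
      show 2 * α * p.1 ≤ p.1 * vdiv Y (Phi p)
      nlinarith
    refine le_trans (le_of_eq ?_) hmono
    have : (∫ p in Set.Icc a b, 2 * α * p.1)
        = 2 * α * ∫ p in Set.Icc a b, p.1 := by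
      rw [integral_const_mul]
    rw [this]
    have harea : (∫ p in Set.Icc a b, p.1) = π * r ^ 2 := by
      rw [show Set.Icc a b = Set.Icc a.1 b.1 ×ˢ Set.Icc a.2 b.2 from Set.Icc_prod_eq a b]
      have : (∫ p in Set.Icc a.1 b.1 ×ˢ Set.Icc a.2 b.2, p.1)
          = (∫ x in Set.Icc a.1 b.1, x) * ∫ y in Set.Icc a.2 b.2, (1:ℝ) := by
        rw [Measure.volume_eq_prod]
        rw [← setIntegral_prod_mul]
        simp
      rw [this]
      have h1 : (∫ x in Set.Icc a.1 b.1, x) = r ^ 2 / 2 := by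
        rw [ha, hb, integral_Icc_eq_integral_Ioc, ← intervalIntegral.integral_of_le hr.le,
          integral_id]
        ring
      have h2 : (∫ y in Set.Icc a.2 b.2, (1:ℝ)) = 2 * π := by
        simp only [ha, hb]
        rw [setIntegral_const,
          Real.volume_real_Icc_of_le (by norm_num [Real.pi_nonneg] : (0:ℝ) ≤ 2*π)]
        norm_num
      rw [h1, h2]; ring
    rw [harea]
  rw [key] at hlower
  nlinarith

lemma vdiv_continuousOn {R : ℝ} (Y : E2 → E2)
    (hdc : ContinuousOn (fderiv ℝ Y) (ball (0:E2) R)) :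
    ContinuousOn (vdiv Y) (ball (0:E2) R) := by
  have : vdiv Y = fun u => ∑ i : Fin 2,
      @inner ℝ _ _ (EuclideanSpace.single i (1:ℝ)) ((fderiv ℝ Y u) (EuclideanSpace.single i 1)) :=
    funext fun u => trace_diag (fderiv ℝ Y u)
  rw [this]
  apply continuousOn_finset_sum
  intro i _
  exact ContinuousOn.inner continuousOn_const
    (((ContinuousLinearMap.apply ℝ E2 (EuclideanSpace.single i (1:ℝ))).continuous).comp_continuousOn hdc)

lemma heinz_aux (R α : ℝ) (hα : 0 < α) (Y : E2 → E2)
    (hYd : ∀ u ∈ ball (0:E2) R, DifferentiableAt ℝ Y u)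
    (hYc : ContinuousOn Y (ball (0:E2) R))
    (hdc : ContinuousOn (fderiv ℝ Y) (ball (0:E2) R))
    (hnorm : ∀ u ∈ ball (0:E2) R, ‖Y u‖ ≤ 1)
    (hdiv : ∀ u ∈ ball (0:E2) R, 2*α ≤ vdiv Y u) :
    R ≤ 1 / α := by
  by_contra hcon
  push_neg at hcon
  obtain ⟨r, hr1, hr2⟩ := exists_between hcon
  have hr0 : 0 < r := lt_trans (by positivity) hr1
  have hcore := core R α r hα hr0 hr2 Y hYd hYc (vdiv_continuousOn Y hdc) hnorm hdiv
  have h1 : 1 < α * r := (div_lt_iff₀' hα).mp hr1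
  nlinarith
end HeinzAux

noncomputable def fromDualR : StrongDual ℝ E2 ≃ₗᵢ[ℝ] E2 where
  toLinearEquiv :=
    { toFun := fun L => (InnerProductSpace.toDual ℝ E2).symm L
      map_add' := fun x y => by simp
      map_smul' := fun c x => by simp
      invFun := fun v => (InnerProductSpace.toDual ℝ E2) v
      left_inv := fun x => by simp
      right_inv := fun v => by simp }
  norm_map' := fun x => by simp

/-- Heinz's classical theorem: a graph over a disk of radius R in Euclidean ℝ³ with
|H| ≥ α > 0 satisfies R ≤ 1/α. -/
theorem heinz_euclidean (R α : ℝ) (hR : 0 < R) (hα : 0 < α)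
    (ψ H : EuclideanSpace ℝ (Fin 2) → ℝ)
    (hψ : ContDiffOn ℝ 2 ψ (ball (0 : EuclideanSpace ℝ (Fin 2)) R))
    (hmean : ∀ u ∈ ball (0 : EuclideanSpace ℝ (Fin 2)) R,
      2 * H u =
        vdiv (fun v => (Real.sqrt (1 + ‖gradient ψ v‖ ^ 2))⁻¹ • gradient ψ v) u)
    (hH : ∀ u ∈ ball (0 : EuclideanSpace ℝ (Fin 2)) R, α ≤ |H u|) :
    R ≤ 1 / α := by
  set D := ball (0 : E2) R with hD
  set X : E2 → E2 := fun v => (Real.sqrt (1 + ‖gradient ψ v‖ ^ 2))⁻¹ • gradient ψ v with hX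
  -- gradient is C¹ on D
  have hgrad : ContDiffOn ℝ 1 (gradient ψ) D := by
    have hfd : ContDiffOn ℝ 1 (fderiv ℝ ψ) D :=
      hψ.fderiv_of_isOpen isOpen_ball (by norm_num)
    have : gradient ψ = fun v => (InnerProductSpace.toDual ℝ E2).symm (fderiv ℝ ψ v) := rfl
    rw [this]
    exact fromDualR.contDiff.comp_contDiffOn hfd
  -- X is C¹ on D
  have hXc1 : ContDiffOn ℝ 1 X D := by
    have hns : ContDiffOn ℝ 1 (fun v => 1 + ‖gradient ψ v‖ ^ 2) D :=
      contDiffOn_const.add (hgrad.norm_sq ℝ)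
    have hpos : ∀ v, (0:ℝ) < 1 + ‖gradient ψ v‖ ^ 2 := fun v => by positivity
    have hsqrt : ContDiffOn ℝ 1 (fun v => Real.sqrt (1 + ‖gradient ψ v‖ ^ 2)) D :=
      hns.sqrt fun v hv => (hpos v).ne'
    have hinv : ContDiffOn ℝ 1 (fun v => (Real.sqrt (1 + ‖gradient ψ v‖ ^ 2))⁻¹) D :=
      hsqrt.inv fun v hv => (Real.sqrt_pos.mpr (hpos v)).ne'
    exact hinv.smul hgrad
  have hXd : ∀ u ∈ D, DifferentiableAt ℝ X u := fun u hu =>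
    (hXc1.differentiableOn one_ne_zero).differentiableAt (isOpen_ball.mem_nhds hu)
  have hXcont : ContinuousOn X D := hXc1.continuousOn
  have hXdc : ContinuousOn (fderiv ℝ X) D :=
    hXc1.continuousOn_fderiv_of_isOpen isOpen_ball le_rfl
  -- norm bound
  have hXnorm : ∀ u, ‖X u‖ ≤ 1 := by
    intro u
    set g := gradient ψ u
    have hs : Real.sqrt (1 + ‖g‖ ^ 2) ^ 2 = 1 + ‖g‖ ^ 2 := Real.sq_sqrt (by positivity)
    have hs1 : 1 ≤ Real.sqrt (1 + ‖g‖ ^ 2) := by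
      nlinarith [Real.sqrt_nonneg (1 + ‖g‖^2)]
    have hgs : ‖g‖ ≤ Real.sqrt (1 + ‖g‖ ^ 2) := by
      nlinarith [norm_nonneg g, Real.sqrt_nonneg (1 + ‖g‖^2)]
    rw [hX]
    simp only [norm_smul, norm_inv, Real.norm_eq_abs,
      abs_of_nonneg (Real.sqrt_nonneg _)]
    calc (Real.sqrt (1 + ‖g‖^2))⁻¹ * ‖g‖
        ≤ (Real.sqrt (1 + ‖g‖^2))⁻¹ * Real.sqrt (1 + ‖g‖^2) :=
          mul_le_mul_of_nonneg_left hgs (by positivity)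
      _ = 1 := inv_mul_cancel₀ (by positivity)
  -- continuity of vdiv X, hence of H on D
  have hvc : ContinuousOn (fun u => vdiv X u / 2) D := by
    have : ContinuousOn (vdiv X) D := HeinzAux.vdiv_continuousOn X hXdc
    exact this.div_const 2
  have hHeq : ∀ u ∈ D, H u = vdiv X u / 2 := fun u hu => by
    have := hmean u hu; linarith
  -- sign dichotomy
  have himg : ∀ u₀ ∈ D, ∀ u₁ ∈ D, H u₀ ≤ 0 → 0 ≤ H u₁ → False := by
    intro u₀ h₀ u₁ h₁ hneg hposi
    have hconn : IsPreconnected ((fun u => vdiv X u / 2) '' D) :=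
      ((convex_ball (0:E2) R).isPreconnected).image _ hvc
    have hord := hconn.ordConnected
    have h0mem : (0:ℝ) ∈ (fun u => vdiv X u / 2) '' D := by
      apply hord.out (Set.mem_image_of_mem _ h₀) (Set.mem_image_of_mem _ h₁)
      constructor
      · rw [← hHeq u₀ h₀]; exact hneg
      · rw [← hHeq u₁ h₁]; exact hposi
    obtain ⟨u, hu, hu0⟩ := h0mem
    have hz : vdiv X u / 2 = 0 := hu0
    have := hH u hu
    rw [hHeq u hu, hz] at this
    simp at this; linarith
  by_cases hsgn : ∀ u ∈ D, α ≤ H u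
  · -- H ≥ α : use X
    apply HeinzAux.heinz_aux R α hα X hXd hXcont hXdc (fun u _ => hXnorm u)
    intro u hu
    have := hmean u hu
    linarith [hmean u hu, hsgn u hu]
  · push_neg at hsgn
    obtain ⟨u₀, hu₀, hlt⟩ := hsgn
    have hneg : H u₀ ≤ -α := by
      rcases le_abs.mp (hH u₀ hu₀) with h | h
      · exfalso; linarith
      · linarith
    -- all H ≤ -α
    have hall : ∀ u ∈ D, H u ≤ -α := by
      intro u hu
      by_contra hc
      push_neg at hc
      have : α ≤ H u := by
        rcases (le_abs.mp (hH u hu)) with h | h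
        · exact h
        · exfalso; linarith
      exact himg u₀ hu₀ u hu (by linarith) (by linarith)
    -- use -X
    have hdiv' : ∀ u ∈ D, 2*α ≤ vdiv (fun v => -(X v)) u := by
      intro u hu
      have hneg : vdiv (fun v => -(X v)) u = - vdiv X u := by
        unfold vdiv
        rw [fderiv_fun_neg]
        simp
      rw [hneg]
      have := hmean u hu
      have := hall u hu
      linarith
    apply HeinzAux.heinz_aux R α hα (fun v => -(X v))
      (fun u hu => (hXd u hu).neg)
      (hXcont.neg)
      (by
        have : (fderiv ℝ (fun v => -(X v))) = fun u => -(fderiv ℝ X u) := by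
          funext u; exact fderiv_fun_neg
        rw [this]; exact hXdc.neg)
      (fun u _ => by simpa using hXnorm u)
      hdiv'
end
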